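/- For all real z₁ > 0 and z₂ > 0, the double Laplace transform ∫₀^∞ ∫₀^∞ b₁ b₂ · max(b₁, b₂) · exp(−b₁ z₁ − b₂ z₂) db₁ db₂ equals 2(z₁⁴ + 3z₁³z₂ + 3z₁²z₂² + 3z₁z₂³ + z₂⁴) / (z₁³ z₂³ (z₁+z₂)³). -/

import Mathlib

open MeasureTheory Real Set Filter

lemma hasDerivAt_A1 {z : ℝ} (hz : z ≠ 0) (x : ℝ) :
    HasDerivAt (fun x : ℝ => -((x * z + 1) / z ^ 2) * Real.exp (-z * x))
      (x * Real.exp (-z * x)) x := by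
  have he : HasDerivAt (fun x : ℝ => Real.exp (-z * x)) (-z * Real.exp (-z * x)) x := by
    simpa [mul_comm] using (((hasDerivAt_id x).const_mul (-z)).exp)
  have hp : HasDerivAt (fun x : ℝ => -((x * z + 1) / z ^ 2)) (-(z / z ^ 2)) x := by
    simpa using ((((hasDerivAt_id x).mul_const z).add_const 1).div_const (z^2)).fun_neg
  refine (hp.fun_mul he).congr_deriv ?_
  field_simp
  ring

lemma hasDerivAt_A2 {z : ℝ} (hz : z ≠ 0) (x : ℝ) :
    HasDerivAt (fun x : ℝ => -((x ^ 2 * z ^ 2 + 2 * x * z + 2) / z ^ 3) * Real.exp (-z * x))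
      (x ^ 2 * Real.exp (-z * x)) x := by
  have he : HasDerivAt (fun x : ℝ => Real.exp (-z * x)) (-z * Real.exp (-z * x)) x := by
    simpa [mul_comm] using (((hasDerivAt_id x).const_mul (-z)).exp)
  have hp : HasDerivAt (fun x : ℝ => -((x ^ 2 * z ^ 2 + 2 * x * z + 2) / z ^ 3))
      (-((2 * x * z ^ 2 + 2 * z) / z ^ 3)) x := by
    have : HasDerivAt (fun x : ℝ => x ^ 2 * z ^ 2 + 2 * x * z + 2)
        (2 * x * z ^ 2 + 2 * z) x := by
      simpa [mul_comm, mul_assoc, mul_left_comm] using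
        (((hasDerivAt_pow 2 x).mul_const (z^2)).add
          (((hasDerivAt_id x).const_mul 2).mul_const z)).add_const 2
    simpa using (this.div_const (z^3)).fun_neg
  refine (hp.fun_mul he).congr_deriv ?_
  field_simp
  ring

lemma integrableOn_pow_mul_exp (n : ℕ) {z : ℝ} (hz : 0 < z) (t : ℝ) :
    IntegrableOn (fun x : ℝ => x ^ n * Real.exp (-z * x)) (Set.Ioi t) := by
  apply integrable_of_isBigO_exp_neg (half_pos hz) (by fun_prop)
  have h0 : Tendsto (fun x : ℝ => x ^ (n:ℝ) * Real.exp (-(z/2) * x)) atTop (nhds 0) :=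
    tendsto_rpow_mul_exp_neg_mul_atTop_nhds_zero _ _ (half_pos hz)
  have h1 : (fun x : ℝ => x ^ n * Real.exp (-(z/2) * x)) =O[atTop] (fun _ => (1:ℝ)) := by
    refine (h0.isBigO_one ℝ).congr' ?_ EventuallyEq.rfl
    filter_upwards [eventually_gt_atTop (0:ℝ)] with x hx
    rw [rpow_natCast]
  have h2 := h1.mul (Asymptotics.isBigO_refl (fun x : ℝ => Real.exp (-(z/2) * x)) atTop)
  refine h2.congr' ?_ ?_
  · filter_upwards with x
    rw [mul_assoc, ← Real.exp_add]
    ring_nf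
  · filter_upwards with x
    simp

lemma tendsto_poly_exp {z : ℝ} (hz : 0 < z) (a b c : ℝ) :
    Tendsto (fun x : ℝ => (a * x ^ 2 + b * x + c) * Real.exp (-z * x)) atTop (nhds 0) := by
  have h2 : Tendsto (fun x : ℝ => x ^ (2:ℝ) * Real.exp (-z * x)) atTop (nhds 0) :=
    tendsto_rpow_mul_exp_neg_mul_atTop_nhds_zero _ _ hz
  have h1 : Tendsto (fun x : ℝ => x ^ (1:ℝ) * Real.exp (-z * x)) atTop (nhds 0) :=
    tendsto_rpow_mul_exp_neg_mul_atTop_nhds_zero _ _ hz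
  have h0 : Tendsto (fun x : ℝ => Real.exp (-z * x)) atTop (nhds 0) := by
    have hm : Tendsto (fun x : ℝ => -z * x) atTop atBot :=
      tendsto_id.const_mul_atTop_of_neg (by linarith)
    exact Real.tendsto_exp_atBot.comp hm
  have := ((h2.const_mul a).add (h1.const_mul b)).add (h0.const_mul c)
  simp only [mul_zero, add_zero] at this
  refine this.congr' ?_
  filter_upwards [eventually_gt_atTop (0:ℝ)] with x hx
  rw [rpow_two, rpow_one]
  ring

lemma integral_Ioi_sq_exp {z : ℝ} (hz : 0 < z) (t : ℝ) :
    ∫ x in Set.Ioi t, x ^ 2 * Real.exp (-z * x) =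
      ((t ^ 2 * z ^ 2 + 2 * t * z + 2) / z ^ 3) * Real.exp (-z * t) := by
  have h := integral_Ioi_of_hasDerivAt_of_tendsto'
    (f := fun x : ℝ => -((x ^ 2 * z ^ 2 + 2 * x * z + 2) / z ^ 3) * Real.exp (-z * x))
    (f' := fun x : ℝ => x ^ 2 * Real.exp (-z * x)) (a := t) (m := 0)
    (fun x _ => hasDerivAt_A2 hz.ne' x) (integrableOn_pow_mul_exp 2 hz t) ?_
  · rw [h]; ring
  · refine (tendsto_poly_exp hz (-(z^2)/z^3) (-(2*z)/z^3) (-(2/z^3))).congr fun x => ?_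
    ring

lemma integral_Ioi_one_exp {z : ℝ} (hz : 0 < z) (t : ℝ) :
    ∫ x in Set.Ioi t, x * Real.exp (-z * x) =
      ((t * z + 1) / z ^ 2) * Real.exp (-z * t) := by
  have h := integral_Ioi_of_hasDerivAt_of_tendsto'
    (f := fun x : ℝ => -((x * z + 1) / z ^ 2) * Real.exp (-z * x))
    (f' := fun x : ℝ => x * Real.exp (-z * x)) (a := t) (m := 0)
    (fun x _ => hasDerivAt_A1 hz.ne' x) ?_ ?_
  · rw [h]; ring
  · simpa using integrableOn_pow_mul_exp 1 hz t
  · refine (tendsto_poly_exp hz 0 (-(z/z^2)) (-(1/z^2))).congr fun x => ?_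
    ring

lemma integral_Ioc_one_exp {z : ℝ} (hz : 0 < z) {t : ℝ} (ht : 0 ≤ t) :
    ∫ x in Set.Ioc (0:ℝ) t, x * Real.exp (-z * x) =
      1 / z ^ 2 - ((t * z + 1) / z ^ 2) * Real.exp (-z * t) := by
  rw [← intervalIntegral.integral_of_le ht]
  rw [intervalIntegral.integral_eq_sub_of_hasDerivAt
    (f := fun x : ℝ => -((x * z + 1) / z ^ 2) * Real.exp (-z * x))
    (fun x _ => hasDerivAt_A1 hz.ne' x) ((Continuous.intervalIntegrable (by fun_prop) _ _))]
  simp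
  ring

lemma inner_eval {z : ℝ} (hz : 0 < z) {b : ℝ} (hb : 0 < b) :
    ∫ x in Set.Ioi (0:ℝ), x * max b x * Real.exp (-z * x)
      = b / z ^ 2 + Real.exp (-z * b) * (b / z ^ 2 + 2 / z ^ 3) := by
  have hcont : Continuous fun x : ℝ => x * max b x * Real.exp (-z * x) :=
    (continuous_id.mul (continuous_const.max continuous_id)).mul (by fun_prop)
  have hI2 : IntegrableOn (fun x : ℝ => x * max b x * Real.exp (-z * x)) (Set.Ioi b) := by
    refine (integrableOn_pow_mul_exp 2 hz b).congr_fun (fun x hx => ?_) measurableSet_Ioi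
    rw [max_eq_right (le_of_lt hx)]; ring
  have hsplit : Set.Ioc (0:ℝ) b ∪ Set.Ioi b = Set.Ioi 0 := Set.Ioc_union_Ioi_eq_Ioi hb.le
  rw [← hsplit, setIntegral_union (Set.Ioc_disjoint_Ioi le_rfl) measurableSet_Ioi
    (hcont.integrableOn_Ioc) hI2]
  have e1 : ∫ x in Set.Ioc (0:ℝ) b, x * max b x * Real.exp (-z * x)
      = b * (1 / z ^ 2 - ((b * z + 1) / z ^ 2) * Real.exp (-z * b)) := by
    rw [← integral_Ioc_one_exp hz hb.le, ← integral_const_mul]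
    refine setIntegral_congr_fun measurableSet_Ioc fun x hx => ?_
    rw [max_eq_left hx.2]; ring
  have e2 : ∫ x in Set.Ioi b, x * max b x * Real.exp (-z * x)
      = ((b ^ 2 * z ^ 2 + 2 * b * z + 2) / z ^ 3) * Real.exp (-z * b) := by
    rw [← integral_Ioi_sq_exp hz b]
    refine setIntegral_congr_fun measurableSet_Ioi fun x hx => ?_
    rw [max_eq_right (le_of_lt hx)]; ring
  rw [e1, e2]
  field_simp
  ring

theorem laplace_max_volume (z₁ z₂ : ℝ) (h₁ : 0 < z₁) (h₂ : 0 < z₂) :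
    ∫ b₁ in Set.Ioi (0:ℝ), ∫ b₂ in Set.Ioi (0:ℝ),
      b₁ * b₂ * max b₁ b₂ * Real.exp (-b₁ * z₁ - b₂ * z₂) =
      2 * (z₁^4 + 3*z₁^3*z₂ + 3*z₁^2*z₂^2 + 3*z₁*z₂^3 + z₂^4) /
        (z₁^3 * z₂^3 * (z₁ + z₂)^3) := by
  have hs : 0 < z₁ + z₂ := by linarith
  have key : ∀ b ∈ Set.Ioi (0:ℝ),
      (∫ b₂ in Set.Ioi (0:ℝ), b * b₂ * max b b₂ * Real.exp (-b * z₁ - b₂ * z₂))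
      = (1/z₂^2) * (b^2 * Real.exp (-z₁*b)) +
        ((1/z₂^2) * (b^2 * Real.exp (-(z₁+z₂)*b)) +
          (2/z₂^3) * (b * Real.exp (-(z₁+z₂)*b))) := by
    intro b hb
    rw [Set.mem_Ioi] at hb
    have step1 : (∫ b₂ in Set.Ioi (0:ℝ), b * b₂ * max b b₂ * Real.exp (-b * z₁ - b₂ * z₂))
        = (b * Real.exp (-z₁ * b)) * ∫ x in Set.Ioi (0:ℝ), x * max b x * Real.exp (-z₂ * x) := by
      rw [← integral_const_mul]
      refine setIntegral_congr_fun measurableSet_Ioi fun x hx => ?_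
      rw [show -b * z₁ - x * z₂ = -z₁ * b + -z₂ * x by ring, Real.exp_add]
      ring
    rw [step1, inner_eval h₂ hb]
    have hE : Real.exp (-z₁*b) * Real.exp (-z₂*b) = Real.exp (-(z₁+z₂)*b) := by
      rw [← Real.exp_add]; ring_nf
    rw [← hE]
    ring
  rw [setIntegral_congr_fun measurableSet_Ioi key]
  have hI1 : IntegrableOn (fun b : ℝ => (1/z₂^2) * (b^2 * Real.exp (-z₁*b))) (Set.Ioi 0) :=
    (integrableOn_pow_mul_exp 2 h₁ 0).const_mul _
  have hI2 : IntegrableOn (fun b : ℝ => (1/z₂^2) * (b^2 * Real.exp (-(z₁+z₂)*b))) (Set.Ioi 0) :=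
    (integrableOn_pow_mul_exp 2 hs 0).const_mul _
  have hI3 : IntegrableOn (fun b : ℝ => (2/z₂^3) * (b * Real.exp (-(z₁+z₂)*b))) (Set.Ioi 0) := by
    have := (integrableOn_pow_mul_exp 1 hs 0).const_mul (2/z₂^3)
    simpa [IntegrableOn] using this
  have hI23 : IntegrableOn (fun b : ℝ => (1/z₂^2) * (b^2 * Real.exp (-(z₁+z₂)*b)) +
      (2/z₂^3) * (b * Real.exp (-(z₁+z₂)*b))) (Set.Ioi 0) := hI2.add hI3
  rw [integral_add hI1 hI23, integral_add hI2 hI3,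
    integral_const_mul, integral_const_mul, integral_const_mul]
  have m2a : ∫ b in Set.Ioi (0:ℝ), b^2 * Real.exp (-z₁*b) = 2 / z₁^3 := by
    have := integral_Ioi_sq_exp h₁ 0
    simpa using this
  have m2b : ∫ b in Set.Ioi (0:ℝ), b^2 * Real.exp (-(z₁+z₂)*b) = 2 / (z₁+z₂)^3 := by
    have := integral_Ioi_sq_exp hs 0
    simpa using this
  have m1 : ∫ b in Set.Ioi (0:ℝ), b * Real.exp (-(z₁+z₂)*b) = 1 / (z₁+z₂)^2 := by
    have := integral_Ioi_one_exp hs 0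
    simpa using this
  rw [m2a, m2b, m1]
  field_simp
  ring
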